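/- Let C be a unital C*-algebra and let α be a *-automorphism of C. The following are equivalent: (1) C is α-simple, i.e., the only closed two-sided ideals I of C with α(I) = I are {0} and C; (2) every nonzero closed two-sided ideal I of C satisfying I ⊆ α(I) equals C; (3) for every nonzero closed two-sided ideal I of C there exists N ∈ ℤ_{>0} such that α^{-1}(I) + α^{-2}(I) + ⋯ + α^{-N}(I) = C. -/

import Mathlib

section Aux

variable {C : Type*} [CStarAlgebra C]

/-- A set that is closed under the two-sided ideal operations. -/
private def IdealSet (S : Set C) : Prop :=
  0 ∈ S ∧ (∀ ⦃x y : C⦄, x ∈ S → y ∈ S → x + y ∈ S) ∧ (∀ ⦃x : C⦄, x ∈ S → -x ∈ S) ∧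
    (∀ (x : C) ⦃y : C⦄, y ∈ S → x * y ∈ S) ∧ (∀ ⦃x : C⦄, x ∈ S → ∀ (y : C), x * y ∈ S)

private lemma idealSet_coe (I : TwoSidedIdeal C) : IdealSet (I : Set C) :=
  ⟨I.zero_mem, fun _ _ hx hy => I.add_mem hx hy, fun _ hx => I.neg_mem hx,
    fun x _ hy => I.mul_mem_left x _ hy, fun _ hx y => I.mul_mem_right _ y hx⟩

private lemma idealSet_image (g : C ≃⋆ₐ[ℂ] C) {S : Set C} (h : IdealSet S) :
    IdealSet (⇑g '' S) := by
  obtain ⟨h0, hadd, hneg, hml, hmr⟩ := h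
  refine ⟨⟨0, h0, map_zero g⟩, ?_, ?_, ?_, ?_⟩
  · rintro _ _ ⟨x, hx, rfl⟩ ⟨y, hy, rfl⟩
    exact ⟨x + y, hadd hx hy, map_add g x y⟩
  · rintro _ ⟨x, hx, rfl⟩
    exact ⟨-x, hneg hx, map_neg g x⟩
  · rintro c _ ⟨y, hy, rfl⟩
    exact ⟨g.symm c * y, hml _ hy, by simp [map_mul]⟩
  · rintro _ ⟨x, hx, rfl⟩ c
    exact ⟨x * g.symm c, hmr hx _, by simp [map_mul]⟩

private lemma idealSet_iterate (g : C ≃⋆ₐ[ℂ] C) {S : Set C} (h : IdealSet S) (n : ℕ) :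
    IdealSet ((⇑g)^[n] '' S) := by
  induction n with
  | zero => simpa using h
  | succ n ih =>
      rw [Function.iterate_succ', Set.image_comp]
      exact idealSet_image g ih

private lemma idealSet_closure {S : Set C} (h : IdealSet S) : IdealSet (closure S) := by
  obtain ⟨h0, hadd, hneg, hml, hmr⟩ := h
  refine ⟨subset_closure h0, ?_, ?_, ?_, ?_⟩
  · intro x y hx hy
    exact map_mem_closure₂ continuous_add hx hy (fun a ha b hb => hadd ha hb)
  · intro x hx
    exact map_mem_closure continuous_neg hx (fun a ha => hneg ha)
  · intro c y hy
    exact map_mem_closure (continuous_mul_left c) hy (fun a ha => hml c ha)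
  · intro x hx c
    have := map_mem_closure (f := fun b => b * c) (continuous_mul_right c) hx
      (fun a ha => hmr ha c)
    exact this

private lemma idealSet_iUnion {S : ℕ → Set C} (h : ∀ n, IdealSet (S n))
    (hmono : Monotone S) : IdealSet (⋃ n, S n) := by
  refine ⟨Set.mem_iUnion.2 ⟨0, (h 0).1⟩, ?_, ?_, ?_, ?_⟩
  · intro x y hx hy
    obtain ⟨n, hn⟩ := Set.mem_iUnion.1 hx
    obtain ⟨m, hm⟩ := Set.mem_iUnion.1 hy
    exact Set.mem_iUnion.2 ⟨max n m, (h _).2.1 (hmono (le_max_left n m) hn)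
      (hmono (le_max_right n m) hm)⟩
  · intro x hx
    obtain ⟨n, hn⟩ := Set.mem_iUnion.1 hx
    exact Set.mem_iUnion.2 ⟨n, (h n).2.2.1 hn⟩
  · intro c y hy
    obtain ⟨n, hn⟩ := Set.mem_iUnion.1 hy
    exact Set.mem_iUnion.2 ⟨n, (h n).2.2.2.1 c hn⟩
  · intro x hx c
    obtain ⟨n, hn⟩ := Set.mem_iUnion.1 hx
    exact Set.mem_iUnion.2 ⟨n, (h n).2.2.2.2 hn c⟩

/-- The closed two-sided ideal generated as the closure of an ideal-like set. -/
private def closIdeal (S : Set C) (h : IdealSet S) : TwoSidedIdeal C :=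
  TwoSidedIdeal.mk' (closure S) (idealSet_closure h).1
    (fun hx hy => (idealSet_closure h).2.1 hx hy)
    (fun hx => (idealSet_closure h).2.2.1 hx)
    (fun hy => (idealSet_closure h).2.2.2.1 _ hy)
    (fun hx => (idealSet_closure h).2.2.2.2 hx _)

private lemma closIdeal_coe (S : Set C) (h : IdealSet S) :
    (closIdeal S h : Set C) = closure S := TwoSidedIdeal.coe_mk' _ _ _ _ _ _

/-- From density of an ideal-like set we get a unit inside it. -/
private lemma exists_isUnit_of_one_mem_closure {S : Set C} (h1 : (1 : C) ∈ closure S) :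
    ∃ u ∈ S, IsUnit u := by
  rw [Metric.mem_closure_iff] at h1
  obtain ⟨u, hu, hdist⟩ := h1 1 one_pos
  refine ⟨u, hu, ?_⟩
  have h : ‖1 - u‖ < 1 := by rwa [dist_eq_norm] at hdist
  have := (Units.oneSub (1 - u) h).isUnit
  simpa using this

private lemma exists_ne_zero_of_ne_bot {I : TwoSidedIdeal C} (h : I ≠ ⊥) :
    ∃ x ∈ I, x ≠ 0 := by
  by_contra hc
  push_neg at hc
  exact h (SetLike.ext fun x =>
    ⟨fun hx => (TwoSidedIdeal.mem_bot C).2 (hc x hx), fun hx => by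
      rw [(TwoSidedIdeal.mem_bot C).1 hx]; exact I.zero_mem⟩)

end Aux

/-- Let `C` be a unital C*-algebra and `α` a *-automorphism of `C`.  The
following are equivalent:
1. `C` is `α`-simple: the only closed two-sided ideals `I` with `α(I) = I` are `{0}` and `C`;
2. every nonzero closed two-sided ideal `I` with `I ⊆ α(I)` equals `C`;
3. for every nonzero closed two-sided ideal `I` there is `N > 0` with
   `α⁻¹(I) + α⁻²(I) + ⋯ + α⁻ᴺ(I) = C`. -/
theorem alphaSimple_tfae {C : Type*} [CStarAlgebra C] (α : C ≃⋆ₐ[ℂ] C) :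
    List.TFAE
      [ ∀ I : TwoSidedIdeal C, IsClosed (I : Set C) → ⇑α '' (I : Set C) = (I : Set C) →
          I = ⊥ ∨ I = ⊤,
        ∀ I : TwoSidedIdeal C, IsClosed (I : Set C) → I ≠ ⊥ →
          (I : Set C) ⊆ ⇑α '' (I : Set C) → I = ⊤,
        ∀ I : TwoSidedIdeal C, IsClosed (I : Set C) → I ≠ ⊥ →
          ∃ N : ℕ, 0 < N ∧ ∀ c : C, ∃ f : Fin N → C,
            (∀ k : Fin N, f k ∈ (⇑α.symm)^[k.val + 1] '' (I : Set C)) ∧ ∑ k, f k = c ] := by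
  have hcont : Continuous ⇑α := (StarAlgEquiv.isometry α).continuous
  have hcont' : Continuous ⇑α.symm := (StarAlgEquiv.isometry α.symm).continuous
  tfae_have 1 → 2 := by
    intro h1 I hcl hne hsub
    -- the increasing union of images `α^[n] '' I`
    set V : ℕ → Set C := fun n => (⇑α)^[n] '' (I : Set C) with hV
    have hVideal : ∀ n, IdealSet (V n) := fun n => idealSet_iterate α (idealSet_coe I) n
    have hVstep : ∀ n, V n ⊆ V (n + 1) := by
      intro n
      have : V (n + 1) = (⇑α)^[n] '' (⇑α '' (I : Set C)) := by
        simp only [hV]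
        rw [Function.iterate_succ, Set.image_comp]
      rw [this]
      exact Set.image_mono hsub
    have hVmono : Monotone V := monotone_nat_of_le_succ hVstep
    have hVsucc : ∀ n, V (n + 1) = ⇑α '' V n := by
      intro n
      simp only [hV]
      rw [Function.iterate_succ', Set.image_comp]
    set U : Set C := ⋃ n, V n with hU
    have hUideal : IdealSet U := idealSet_iUnion hVideal hVmono
    set K : TwoSidedIdeal C := closIdeal U hUideal with hK
    have hKcoe : (K : Set C) = closure U := closIdeal_coe U hUideal
    have hKclosed : IsClosed (K : Set C) := by rw [hKcoe]; exact isClosed_closure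
    have hKinv : ⇑α '' (K : Set C) = (K : Set C) := by
      rw [hKcoe]
      apply Set.Subset.antisymm
      · rintro _ ⟨x, hx, rfl⟩
        refine map_mem_closure hcont hx ?_
        intro z hz
        obtain ⟨n, hn⟩ := Set.mem_iUnion.1 hz
        exact Set.mem_iUnion.2 ⟨n + 1, (hVsucc n) ▸ ⟨z, hn, rfl⟩⟩
      · intro x hx
        have hsymm : α.symm x ∈ closure U := by
          refine map_mem_closure hcont' hx ?_
          intro z hz
          obtain ⟨n, hn⟩ := Set.mem_iUnion.1 hz
          have : z ∈ V (n + 1) := hVstep n hn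
          rw [hVsucc n] at this
          obtain ⟨w, hw, rfl⟩ := this
          have : α.symm (α w) = w := α.symm_apply_apply w
          rw [this]
          exact Set.mem_iUnion.2 ⟨n, hw⟩
        exact ⟨α.symm x, hsymm, α.apply_symm_apply x⟩
    have hKne : K ≠ ⊥ := by
      obtain ⟨x, hxI, hx0⟩ := exists_ne_zero_of_ne_bot hne
      intro hbot
      have hxK : x ∈ (K : Set C) := by
        rw [hKcoe]
        exact subset_closure (Set.mem_iUnion.2 ⟨0, by simpa [hV] using hxI⟩)
      rw [hbot] at hxK
      exact hx0 ((TwoSidedIdeal.mem_bot C).1 hxK)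
    rcases h1 K hKclosed hKinv with hbot | htop
    · exact absurd hbot hKne
    -- now `1 ∈ closure U`; extract a unit in some `V n`
    have h1K : (1 : C) ∈ closure U := by
      have : (1 : C) ∈ (K : Set C) := by rw [htop]; exact SetLike.mem_coe.2 (TwoSidedIdeal.mem_top C)
      rwa [hKcoe] at this
    obtain ⟨u, huU, huUnit⟩ := exists_isUnit_of_one_mem_closure h1K
    obtain ⟨n, hun⟩ := Set.mem_iUnion.1 huU
    obtain ⟨v, hv⟩ := huUnit
    -- every element of `C` lies in `V n`
    have hall : ∀ c : C, c ∈ V n := by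
      intro c
      have : (c * ↑v⁻¹) * u ∈ V n := (hVideal n).2.2.2.1 _ hun
      have heq : (c * ↑v⁻¹) * u = c := by
        rw [← hv, mul_assoc, Units.inv_mul, mul_one]
      rwa [heq] at this
    -- hence `I = ⊤`
    have hIall : ∀ c : C, c ∈ I := by
      intro c
      obtain ⟨x, hxI, hx⟩ := hall ((⇑α)^[n] c)
      have hinj : Function.Injective ((⇑α)^[n]) := Function.Injective.iterate α.injective n
      have : x = c := hinj hx
      exact this ▸ hxI
    exact TwoSidedIdeal.eq_top I (hIall 1)
  tfae_have 2 → 3 := by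
    intro h2 I hcl hne
    set T : ℕ → Set C := fun m => (⇑α.symm)^[m] '' (I : Set C) with hT
    have hTideal : ∀ m, IdealSet (T m) := fun m => idealSet_iterate α.symm (idealSet_coe I) m
    -- finite sums with prescribed membership
    set J : ℕ → Set C := fun N =>
      {c | ∃ f : Fin N → C, (∀ k : Fin N, f k ∈ T (k.val + 1)) ∧ ∑ k, f k = c} with hJ
    have hJideal : ∀ N, IdealSet (J N) := by
      intro N
      refine ⟨⟨fun _ => 0, fun k => (hTideal _).1, by simp⟩, ?_, ?_, ?_, ?_⟩
      · rintro _ _ ⟨f, hf, rfl⟩ ⟨g, hg, rfl⟩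
        exact ⟨fun k => f k + g k, fun k => (hTideal _).2.1 (hf k) (hg k), by
          rw [← Finset.sum_add_distrib]⟩
      · rintro _ ⟨f, hf, rfl⟩
        exact ⟨fun k => -f k, fun k => (hTideal _).2.2.1 (hf k), by
          rw [← Finset.sum_neg_distrib]⟩
      · rintro c _ ⟨f, hf, rfl⟩
        exact ⟨fun k => c * f k, fun k => (hTideal _).2.2.2.1 c (hf k), by
          rw [← Finset.mul_sum]⟩
      · rintro _ ⟨f, hf, rfl⟩ c
        exact ⟨fun k => f k * c, fun k => (hTideal _).2.2.2.2 (hf k) c, by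
          rw [← Finset.sum_mul]⟩
    have hJstep : ∀ N, J N ⊆ J (N + 1) := by
      rintro N _ ⟨f, hf, rfl⟩
      refine ⟨Fin.snoc f 0, ?_, ?_⟩
      · intro k
        induction k using Fin.lastCases with
        | last => rw [Fin.snoc_last]; exact (hTideal _).1
        | cast j => rw [Fin.snoc_castSucc]; exact hf j
      · rw [Fin.sum_univ_castSucc]
        simp
    have hJmono : Monotone J := monotone_nat_of_le_succ hJstep
    set U : Set C := ⋃ N, J N with hU
    have hUideal : IdealSet U := idealSet_iUnion hJideal hJmono
    -- `α.symm` maps `U` into `U`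
    have hsymmU : ∀ z ∈ U, α.symm z ∈ U := by
      intro z hz
      obtain ⟨N, hN⟩ := Set.mem_iUnion.1 hz
      obtain ⟨f, hf, rfl⟩ := hN
      refine Set.mem_iUnion.2 ⟨N + 1, Fin.cons 0 (fun k => α.symm (f k)), ?_, ?_⟩
      · intro k
        induction k using Fin.cases with
        | zero => rw [Fin.cons_zero]; exact (hTideal 1).1
        | succ j =>
            rw [Fin.cons_succ]
            have hmem : f j ∈ T (j.val + 1) := hf j
            obtain ⟨x, hx, hxe⟩ := hmem
            refine ⟨x, hx, ?_⟩
            have hval : (j.succ.val + 1) = (j.val + 1) + 1 := by simp [Fin.val_succ]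
            rw [hval, Function.iterate_succ_apply', hxe]
      · rw [Fin.sum_univ_succ]
        simp [map_sum]
    set K : TwoSidedIdeal C := closIdeal U hUideal with hK
    have hKcoe : (K : Set C) = closure U := closIdeal_coe U hUideal
    have hKclosed : IsClosed (K : Set C) := by rw [hKcoe]; exact isClosed_closure
    have hKne : K ≠ ⊥ := by
      obtain ⟨x, hxI, hx0⟩ := exists_ne_zero_of_ne_bot hne
      intro hbot
      have hx1 : α.symm x ∈ J 1 := by
        refine ⟨fun _ => α.symm x, fun k => ?_, by rw [Fin.sum_univ_one]⟩
        have hk : (k : Fin 1) = 0 := Subsingleton.elim _ _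
        rw [hk]
        exact ⟨x, hxI, rfl⟩
      have hxK : α.symm x ∈ (K : Set C) := by
        rw [hKcoe]; exact subset_closure (Set.mem_iUnion.2 ⟨1, hx1⟩)
      rw [hbot] at hxK
      have : α.symm x = 0 := (TwoSidedIdeal.mem_bot C).1 hxK
      exact hx0 (by simpa using congrArg ⇑α this)
    have hKsub : (K : Set C) ⊆ ⇑α '' (K : Set C) := by
      rw [hKcoe]
      intro x hx
      have hsymm : α.symm x ∈ closure U := map_mem_closure hcont' hx hsymmU
      exact ⟨α.symm x, hsymm, α.apply_symm_apply x⟩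
    have htop := h2 K hKclosed hKne hKsub
    have h1K : (1 : C) ∈ closure U := by
      have : (1 : C) ∈ (K : Set C) := by rw [htop]; exact SetLike.mem_coe.2 (TwoSidedIdeal.mem_top C)
      rwa [hKcoe] at this
    obtain ⟨u, huU, huUnit⟩ := exists_isUnit_of_one_mem_closure h1K
    obtain ⟨N, huN⟩ := Set.mem_iUnion.1 huU
    obtain ⟨v, hv⟩ := huUnit
    refine ⟨N + 1, Nat.succ_pos N, fun c => ?_⟩
    have huN' : u ∈ J (N + 1) := hJstep N huN
    have : (c * ↑v⁻¹) * u ∈ J (N + 1) := (hJideal _).2.2.2.1 _ huN'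
    have heq : (c * ↑v⁻¹) * u = c := by
      rw [← hv, mul_assoc, Units.inv_mul, mul_one]
    rw [heq] at this
    exact this
  tfae_have 3 → 1 := by
    intro h3 I hcl hinv
    by_cases hne : I = ⊥
    · exact Or.inl hne
    refine Or.inr ?_
    have hsymmI : ⇑α.symm '' (I : Set C) = (I : Set C) := by
      conv_lhs => rw [← hinv]
      rw [← Set.image_comp]
      simp [Function.comp]
    have hiter : ∀ m, (⇑α.symm)^[m] '' (I : Set C) = (I : Set C) := by
      intro m
      induction m with
      | zero => simp
      | succ m ih => rw [Function.iterate_succ', Set.image_comp, ih, hsymmI]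
    obtain ⟨N, hN, hdec⟩ := h3 I hcl hne
    have hIall : ∀ c : C, c ∈ I := by
      intro c
      obtain ⟨f, hf, hsum⟩ := hdec c
      have hfI : ∀ k, f k ∈ I := by
        intro k
        have := hf k
        rwa [hiter (k.val + 1)] at this
      rw [← hsum]
      exact sum_mem fun k _ => hfI k
    exact TwoSidedIdeal.eq_top I (hIall 1)
  tfae_finish
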